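/- arXiv:2404.16406 — 2 statements merged into one kernel-verified Lean document; each statement's English description precedes it below -/
import Mathlib

section
/- The constraint-solving rewriting system terminates: there is no infinite sequence of applications of the rules (decomposition, deletion of trivial equations t = t, orientation t = X → X = t for non-variable t, and variable elimination with occurs-check) starting from any finite set of equality constraints. -/
set_option linter.unusedSectionVars false
set_option linter.unusedVariables false

inductive Tm (F V : Type) : Type
  | var : V → Tm F V
  | app : F → List (Tm F V) → Tm F V

namespace Tm
variable {F V : Type}

def subst (θ : V → Tm F V) : Tm F V → Tm F V
  | var x => θ x
  | app f ts => app f (ts.attach.map (fun t => subst θ t.1))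
decreasing_by simp_wf; have := List.sizeOf_lt_of_mem t.2; omega

inductive Occurs (x : V) : Tm F V → Prop
  | var : Occurs x (var x)
  | app {f : F} {ts : List (Tm F V)} {t : Tm F V} : t ∈ ts → Occurs x t → Occurs x (app f ts)

end Tm

theorem nat_sum_pos {l : List ℕ} (h : 0 < l.sum) : ∃ n ∈ l, 0 < n := by
  by_contra hc; push_neg at hc
  have : l.sum = 0 := List.sum_eq_zero_iff.mpr (by intro n hn; have := hc n hn; omega)
  omega

theorem nat_sum_pos_of_mem {l : List ℕ} {n : ℕ} (hn : n ∈ l) (h : 0 < n) : 0 < l.sum := by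
  have := List.single_le_sum (l := l) (by intro y _; omega) n hn
  omega

namespace Tm
variable {F V : Type}

theorem ind' {P : Tm F V → Prop} (hv : ∀ x, P (var x))
    (ha : ∀ f ts, (∀ t ∈ ts, P t) → P (app f ts)) : ∀ t, P t
  | var x => hv x
  | app f ts => ha f ts (fun s hs => ind' hv ha s)
decreasing_by have := List.sizeOf_lt_of_mem hs; simp_wf; omega

def occ [DecidableEq V] (x : V) : Tm F V → ℕ
  | var y => if y = x then 1 else 0
  | app _ ts => (ts.attach.map (fun t => occ x t.1)).sum
decreasing_by simp_wf; have := List.sizeOf_lt_of_mem t.2; omega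

def size : Tm F V → ℕ
  | var _ => 1
  | app _ ts => 1 + (ts.attach.map (fun t => size t.1)).sum
decreasing_by simp_wf; have := List.sizeOf_lt_of_mem t.2; omega

variable [DecidableEq V]

@[simp] theorem occ_var (x y : V) : occ (F := F) x (var y) = if y = x then 1 else 0 := by
  rw [occ]

@[simp] theorem occ_app (x : V) (f : F) (ts : List (Tm F V)) :
    occ x (app f ts) = (ts.map (occ x)).sum := by
  rw [occ, List.attach_map_val]

@[simp] theorem size_var (x : V) : size (F := F) (var x) = 1 := by rw [size]

@[simp] theorem size_app (f : F) (ts : List (Tm F V)) :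
    size (app f ts) = 1 + (ts.map size).sum := by
  rw [size, List.attach_map_val]

theorem size_pos (t : Tm F V) : 0 < size t := by
  cases t with
  | var x => simp
  | app f ts => simp

@[simp] theorem subst_var (θ : V → Tm F V) (x : V) : subst θ (var x) = θ x := by rw [subst]

@[simp] theorem subst_app (θ : V → Tm F V) (f : F) (ts : List (Tm F V)) :
    subst θ (app f ts) = app f (ts.map (subst θ)) := by
  rw [subst, List.attach_map_val]

theorem occ_pos_iff {x : V} {t : Tm F V} : 0 < occ x t ↔ Occurs x t := by
  induction t using ind' with
  | hv y =>
    simp only [occ_var]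
    constructor
    · intro h
      split at h
      · subst ‹y = x›; exact Occurs.var
      · omega
    · rintro ⟨⟩; simp
  | ha f ts ih =>
    simp only [occ_app]
    constructor
    · intro h
      obtain ⟨s, hs, hpos⟩ := nat_sum_pos h
      obtain ⟨u, hu, rfl⟩ := List.mem_map.mp hs
      exact Occurs.app hu ((ih u hu).mp hpos)
    · intro h
      rcases h with _ | @⟨f', ts', u, hu, ho⟩
      exact nat_sum_pos_of_mem (List.mem_map_of_mem hu) ((ih u hu).mpr ho)

theorem occ_subst_zero {x : V} (θ : V → Tm F V) (h : ∀ z, occ x (θ z) = 0) (s : Tm F V) :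
    occ x (subst θ s) = 0 := by
  induction s using ind' with
  | hv y => simp [h]
  | ha f ts ih =>
    simp only [subst_app, occ_app, List.map_map]
    apply List.sum_eq_zero
    intro n hn
    obtain ⟨u, hu, rfl⟩ := List.mem_map.mp hn
    exact ih u hu

theorem occ_subst_eq {y : V} (θ : V → Tm F V) (hy : θ y = var y)
    (h : ∀ z, z ≠ y → occ y (θ z) = 0) (s : Tm F V) :
    occ y (subst θ s) = occ y s := by
  induction s using ind' with
  | hv z =>
    by_cases hz : z = y
    · subst hz; simp [hy]
    · simp [h z hz, hz]
  | ha f ts ih =>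
    simp only [subst_app, occ_app, List.map_map]
    congr 1
    exact List.map_congr_left (by intro u hu; exact ih u hu)

theorem occ_subst_pos {y : V} (θ : V → Tm F V) {s : Tm F V}
    (h : 0 < occ y (subst θ s)) : ∃ z, 0 < occ z s ∧ 0 < occ y (θ z) := by
  induction s using ind' with
  | hv z =>
    refine ⟨z, by simp, by simpa using h⟩
  | ha f ts ih =>
    simp only [subst_app, occ_app, List.map_map] at h
    obtain ⟨n, hn, hpos⟩ := nat_sum_pos h
    obtain ⟨u, hu, rfl⟩ := List.mem_map.mp hn
    obtain ⟨z, hz1, hz2⟩ := ih u hu hpos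
    exact ⟨z, by simpa using nat_sum_pos_of_mem (List.mem_map_of_mem (f := occ z) hu) hz1, hz2⟩

end Tm

/-- The substitution replacing the single variable `x` by `t`. -/
def single {F V : Type} [DecidableEq V] (x : V) (t : Tm F V) : V → Tm F V :=
  fun y => if y = x then t else Tm.var y

/-- Apply a substitution to both sides of an equation. -/
def applyEq {F V : Type} (σ : V → Tm F V) (p : Tm F V × Tm F V) : Tm F V × Tm F V :=
  (Tm.subst σ p.1, Tm.subst σ p.2)

noncomputable section

namespace MM
variable {F V : Type} [DecidableEq V]

open Tm

def varsT : Tm F V → Finset V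
  | .var x => {x}
  | .app _ ts => (ts.attach.map (fun t => varsT t.1)).foldr (· ∪ ·) ∅
decreasing_by simp_wf; have := List.sizeOf_lt_of_mem t.2; omega

theorem mem_foldr_union {l : List (Finset V)} {x : V} :
    x ∈ l.foldr (· ∪ ·) ∅ ↔ ∃ s ∈ l, x ∈ s := by
  induction l with
  | nil => simp
  | cons a l ih => simp [ih]

theorem mem_varsT {x : V} {t : Tm F V} : x ∈ varsT t ↔ 0 < occ x t := by
  induction t using Tm.ind' with
  | hv y =>
    rw [varsT]
    by_cases h : y = x
    · subst h; simp
    · simp [h, Ne.symm h]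
  | ha f ts ih =>
    rw [varsT, List.attach_map_val]
    rw [mem_foldr_union]
    simp only [occ_app, List.mem_map]
    constructor
    · rintro ⟨s, ⟨u, hu, rfl⟩, hx⟩
      exact nat_sum_pos_of_mem (List.mem_map_of_mem hu) ((ih u hu).mp hx)
    · intro h
      obtain ⟨n, hn, hpos⟩ := nat_sum_pos h
      obtain ⟨u, hu, rfl⟩ := List.mem_map.mp hn
      exact ⟨varsT u, ⟨u, hu, rfl⟩, (ih u hu).mpr hpos⟩

open Classical in
def occS (x : V) (S : Multiset (Tm F V × Tm F V)) : ℕ :=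
  (S.map fun p => occ x p.1 + occ x p.2).sum

def sizeS (S : Multiset (Tm F V × Tm F V)) : ℕ :=
  (S.map fun p => Tm.size p.1 + Tm.size p.2).sum

open Classical in
def lhsC (x : V) (S : Multiset (Tm F V × Tm F V)) : ℕ :=
  S.countP (fun p => p.1 = Tm.var x)

open Classical in
def m3 (S : Multiset (Tm F V × Tm F V)) : ℕ :=
  S.countP (fun p => (∃ y, p.2 = Tm.var y) ∧ ∀ y, p.1 ≠ Tm.var y)

open Classical in
def varsS (S : Multiset (Tm F V × Tm F V)) : Finset V :=
  S.toFinset.biUnion (fun p => varsT p.1 ∪ varsT p.2)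

def solved (x : V) (S : Multiset (Tm F V × Tm F V)) : Prop :=
  occS x S = 1 ∧ lhsC x S = 1

open Classical in
def uv (S : Multiset (Tm F V × Tm F V)) : Finset V :=
  (varsS S).filter (fun x => ¬ solved x S)

@[simp] theorem occS_cons (x : V) (a b : Tm F V) (S : Multiset (Tm F V × Tm F V)) :
    occS x ((a, b) ::ₘ S) = occ x a + occ x b + occS x S := by
  simp [occS]

@[simp] theorem sizeS_cons (a b : Tm F V) (S : Multiset (Tm F V × Tm F V)) :
    sizeS ((a, b) ::ₘ S) = Tm.size a + Tm.size b + sizeS S := by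
  simp [sizeS]

open Classical in
theorem lhsC_cons (x : V) (a b : Tm F V) (S : Multiset (Tm F V × Tm F V)) :
    lhsC x ((a, b) ::ₘ S) = lhsC x S + (if a = Tm.var x then 1 else 0) := by
  simp [lhsC, Multiset.countP_cons]

open Classical in
theorem m3_cons (a b : Tm F V) (S : Multiset (Tm F V × Tm F V)) :
    m3 ((a, b) ::ₘ S) = m3 S + (if (∃ y, b = Tm.var y) ∧ ∀ y, a ≠ Tm.var y then 1 else 0) := by
  simp [m3, Multiset.countP_cons]

theorem occS_pos_iff {x : V} {S : Multiset (Tm F V × Tm F V)} :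
    0 < occS x S ↔ ∃ p ∈ S, 0 < occ x p.1 + occ x p.2 := by
  constructor
  · intro h
    by_contra hc
    push_neg at hc
    have : occS x S = 0 := by
      apply Multiset.sum_eq_zero
      intro n hn
      obtain ⟨p, hp, rfl⟩ := Multiset.mem_map.mp hn
      have := hc p hp; omega
    omega
  · rintro ⟨p, hp, hpos⟩
    have := Multiset.single_le_sum (s := S.map fun p => occ x p.1 + occ x p.2)
      (by intro y _; omega) _ (Multiset.mem_map_of_mem _ hp)
    unfold occS; omega

theorem mem_varsS {x : V} {S : Multiset (Tm F V × Tm F V)} :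
    x ∈ varsS S ↔ 0 < occS x S := by
  rw [varsS, occS_pos_iff]
  simp only [Finset.mem_biUnion, Multiset.mem_toFinset, Finset.mem_union, mem_varsT]
  constructor
  · rintro ⟨p, hp, h | h⟩ <;> exact ⟨p, hp, by omega⟩
  · rintro ⟨p, hp, h⟩
    refine ⟨p, hp, ?_⟩
    omega

open Classical in
theorem mem_uv {x : V} {S : Multiset (Tm F V × Tm F V)} :
    x ∈ uv S ↔ 0 < occS x S ∧ ¬ solved x S := by
  rw [uv, Finset.mem_filter, mem_varsS]

theorem lhsC_le_occS (x : V) (S : Multiset (Tm F V × Tm F V)) : lhsC x S ≤ occS x S := by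
  induction S using Multiset.induction_on with
  | empty => simp [lhsC, occS]
  | cons p S ih =>
    rw [lhsC_cons, occS_cons]
    split
    · rename_i h; rw [h]; simp; omega
    · omega

theorem lhsC_pos_iff {x : V} {S : Multiset (Tm F V × Tm F V)} :
    0 < lhsC x S ↔ ∃ p ∈ S, p.1 = Tm.var x := by
  classical
  rw [lhsC]
  rw [Multiset.countP_pos]

end MM
end

/-- One step of the Martelli–Montanari rewriting rules on a finite (multi)set of
equations between first-order terms. -/
inductive Step {F V : Type} [DecidableEq V] :
    Multiset (Tm F V × Tm F V) → Multiset (Tm F V × Tm F V) → Prop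
  | decompose (f : F) (ts ss : List (Tm F V)) (R : Multiset (Tm F V × Tm F V))
      (hlen : ts.length = ss.length) :
      Step ((Tm.app f ts, Tm.app f ss) ::ₘ R) (↑(ts.zip ss) + R)
  | delete (t : Tm F V) (R : Multiset (Tm F V × Tm F V)) :
      Step ((t, t) ::ₘ R) R
  | orient (t : Tm F V) (x : V) (R : Multiset (Tm F V × Tm F V))
      (h : ∀ y : V, t ≠ Tm.var y) :
      Step ((t, Tm.var x) ::ₘ R) ((Tm.var x, t) ::ₘ R)
  | elim (x : V) (t : Tm F V) (R : Multiset (Tm F V × Tm F V))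
      (h1 : ¬ Tm.Occurs x t)
      (h2 : ∃ p ∈ R, Tm.Occurs x p.1 ∨ Tm.Occurs x p.2) :
      Step ((Tm.var x, t) ::ₘ R) ((Tm.var x, t) ::ₘ R.map (applyEq (single x t)))

namespace MM
variable {F V : Type} [DecidableEq V]
open Tm

theorem zip_sum {α : Type} (g h : α → ℕ) : ∀ (ts ss : List α), ts.length = ss.length →
    ((ts.zip ss).map fun p => g p.1 + h p.2).sum = (ts.map g).sum + (ss.map h).sum
  | [], [], _ => by simp
  | a :: ts, b :: ss, hlen => by
    simp only [List.zip_cons_cons, List.map_cons, List.sum_cons]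
    have := zip_sum g h ts ss (by simpa using hlen)
    omega
  | [], b :: ss, hlen => by simp at hlen
  | a :: ts, [], hlen => by simp at hlen

noncomputable def μ (S : Multiset (Tm F V × Tm F V)) : ℕ ×ₗ ℕ ×ₗ ℕ :=
  toLex ((uv S).card, toLex (sizeS S, m3 S))

theorem lex3_lt {a1 a2 a3 b1 b2 b3 : ℕ}
    (h : a1 < b1 ∨ (a1 = b1 ∧ (a2 < b2 ∨ (a2 = b2 ∧ a3 < b3)))) :
    toLex ((a1 : ℕ), toLex ((a2 : ℕ), (a3 : ℕ))) < toLex (b1, toLex (b2, b3)) := by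
  rw [Prod.Lex.lt_iff]
  rcases h with h | ⟨h1, h⟩
  · exact Or.inl h
  · exact Or.inr ⟨h1, Prod.Lex.lt_iff.mpr h⟩

theorem step_decrease {S S' : Multiset (Tm F V × Tm F V)} (h : Step S S') : μ S' < μ S := by
  cases h with
  | decompose f ts ss R hlen =>
    have hocc : ∀ y : V, occS y ((↑(ts.zip ss) : Multiset (Tm F V × Tm F V)) + R) = occS y ((Tm.app f ts, Tm.app f ss) ::ₘ R) := by
      intro y
      rw [occS_cons]
      simp only [occS, Multiset.map_add, Multiset.sum_add, Multiset.map_coe, Multiset.sum_coe]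
      rw [zip_sum (occ y) (occ y) ts ss hlen]
      try simp only [occ_app]
      try omega
    have hsize : sizeS ((↑(ts.zip ss) : Multiset (Tm F V × Tm F V)) + R) + 2 = sizeS ((Tm.app f ts, Tm.app f ss) ::ₘ R) := by
      rw [sizeS_cons]
      simp only [sizeS, Multiset.map_add, Multiset.sum_add, Multiset.map_coe, Multiset.sum_coe]
      rw [zip_sum Tm.size Tm.size ts ss hlen]
      try simp only [size_app]
      try omega
    have hlhsR : ∀ y : V, lhsC y R ≤ lhsC y ((↑(ts.zip ss) : Multiset (Tm F V × Tm F V)) + R) := by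
      intro y
      classical
      rw [lhsC, lhsC, Multiset.countP_add]
      omega
    have hsub : uv ((↑(ts.zip ss) : Multiset (Tm F V × Tm F V)) + R) ⊆ uv ((Tm.app f ts, Tm.app f ss) ::ₘ R) := by
      intro y hy
      rw [mem_uv] at hy ⊢
      refine ⟨by rw [← hocc y]; exact hy.1, ?_⟩
      intro hs
      apply hy.2
      have h1 : occS y ((↑(ts.zip ss) : Multiset (Tm F V × Tm F V)) + R) = 1 := by rw [hocc y]; exact hs.1
      have hlhsS : lhsC y ((Tm.app f ts, Tm.app f ss) ::ₘ R) = lhsC y R := by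
        rw [lhsC_cons, if_neg (by simp)]
        omega
      have hle := lhsC_le_occS y ((↑(ts.zip ss) : Multiset (Tm F V × Tm F V)) + R)
      have := hlhsR y
      refine ⟨h1, ?_⟩
      have h2 := hs.2
      rw [hlhsS] at h2
      omega
    refine lex3_lt ?_
    have hc := Finset.card_le_card hsub
    rcases lt_or_eq_of_le hc with hlt | heq
    · exact Or.inl hlt
    · exact Or.inr ⟨heq, Or.inl (by omega)⟩
  | delete t _ =>
    have hsub : uv S' ⊆ uv ((t, t) ::ₘ S') := by
      intro y hy
      rw [mem_uv] at hy ⊢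
      refine ⟨by rw [occS_cons]; omega, ?_⟩
      intro hs
      apply hy.2
      have h1 := hs.1
      rw [occS_cons] at h1
      have hocct : occ y t = 0 := by omega
      have h2 := hs.2
      rw [lhsC_cons, if_neg ?_] at h2
      · exact ⟨by omega, by omega⟩
      · intro hc
        rw [hc] at hocct
        simp at hocct
    refine lex3_lt ?_
    have hc := Finset.card_le_card hsub
    have hs : sizeS S' < sizeS ((t, t) ::ₘ S') := by
      rw [sizeS_cons]
      have := size_pos t
      omega
    rcases lt_or_eq_of_le hc with hlt | heq
    · exact Or.inl hlt
    · exact Or.inr ⟨heq, Or.inl hs⟩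
  | orient t x R h =>
    have hocc : ∀ y : V, occS y ((Tm.var x, t) ::ₘ R) = occS y ((t, Tm.var x) ::ₘ R) := by
      intro y; rw [occS_cons, occS_cons]; omega
    have hsize : sizeS ((Tm.var x, t) ::ₘ R) = sizeS ((t, Tm.var x) ::ₘ R) := by
      rw [sizeS_cons, sizeS_cons]; omega
    have hsub : uv ((Tm.var x, t) ::ₘ R) ⊆ uv ((t, Tm.var x) ::ₘ R) := by
      intro y hy
      rw [mem_uv] at hy ⊢
      refine ⟨by rw [← hocc y]; exact hy.1, ?_⟩
      intro hs
      by_cases hyx : y = x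
      · subst hyx
        have h1 := hs.1
        rw [occS_cons] at h1
        simp only [occ_var, eq_self_iff_true, if_true] at h1
        have h2 := hs.2
        rw [lhsC_cons, if_neg (h y)] at h2
        have := lhsC_le_occS y R
        omega
      · apply hy.2
        have h1 : occS y ((Tm.var x, t) ::ₘ R) = 1 := by rw [hocc y]; exact hs.1
        have h2 := hs.2
        rw [lhsC_cons, if_neg (h y)] at h2
        refine ⟨h1, ?_⟩
        rw [lhsC_cons, if_neg ?_]
        · exact h2
        · simp only [Tm.var.injEq]
          exact fun hc => hyx hc.symm
    have hm3 : m3 ((Tm.var x, t) ::ₘ R) < m3 ((t, Tm.var x) ::ₘ R) := by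
      rw [m3_cons, m3_cons, if_neg (fun hc => hc.2 x rfl), if_pos ⟨⟨x, rfl⟩, h⟩]
      omega
    refine lex3_lt ?_
    have hc := Finset.card_le_card hsub
    rcases lt_or_eq_of_le hc with hlt | heq
    · exact Or.inl hlt
    · exact Or.inr ⟨heq, Or.inr ⟨hsize, hm3⟩⟩
  | elim x t R h1 h2 =>
    set σ := single x t with hσ
    have hocct : occ x t = 0 := by
      by_contra hc
      exact h1 (occ_pos_iff.mp (by omega))
    have hσ0 : ∀ z, occ x (σ z) = 0 := by
      intro z
      rw [hσ, single]
      split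
      · exact hocct
      · rename_i hz; simp [hz]
    have hoccmap0 : occS x (R.map (applyEq σ)) = 0 := by
      rw [occS, Multiset.map_map]
      apply Multiset.sum_eq_zero
      intro n hn
      obtain ⟨q, hq, rfl⟩ := Multiset.mem_map.mp hn
      simp only [Function.comp_apply, applyEq]
      rw [occ_subst_zero σ hσ0, occ_subst_zero σ hσ0]
      rfl
    have hsolved : solved x ((Tm.var x, t) ::ₘ R.map (applyEq σ)) := by
      constructor
      · rw [occS_cons, hoccmap0]
        simp [hocct]
      · rw [lhsC_cons, if_pos rfl]
        have : lhsC x (R.map (applyEq σ)) = 0 := by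
          classical
          rw [lhsC, Multiset.countP_eq_zero]
          intro a ha hc
          obtain ⟨q, hq, rfl⟩ := Multiset.mem_map.mp ha
          have : occ x (Tm.subst σ q.1) = 0 := occ_subst_zero σ hσ0 q.1
          rw [show (applyEq σ q).1 = Tm.subst σ q.1 from rfl] at hc
          rw [hc] at this
          simp at this
        omega
    have hxS : x ∈ uv ((Tm.var x, t) ::ₘ R) := by
      rw [mem_uv]
      obtain ⟨p, hp, hocc⟩ := h2
      have hppos : 0 < occ x p.1 + occ x p.2 := by
        rcases hocc with ho | ho
        · have := occ_pos_iff.mpr ho; omega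
        · have := occ_pos_iff.mpr ho; omega
      have hRpos : 0 < occS x R := occS_pos_iff.mpr ⟨p, hp, hppos⟩
      constructor
      · rw [occS_cons]; omega
      · intro hs
        have := hs.1
        rw [occS_cons] at this
        simp only [occ_var, eq_self_iff_true, if_true] at this
        omega
    have hxS' : x ∉ uv ((Tm.var x, t) ::ₘ R.map (applyEq σ)) := by
      rw [mem_uv]
      intro hc
      exact hc.2 hsolved
    have hsub : uv ((Tm.var x, t) ::ₘ R.map (applyEq σ)) ⊆ uv ((Tm.var x, t) ::ₘ R) := by
      intro y hy
      by_cases hyx : y = x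
      · subst hyx; exact absurd hy hxS'
      rw [mem_uv] at hy ⊢
      have hvarx : occ y (Tm.var x : Tm F V) = 0 := by
        rw [occ_var, if_neg (fun hc : x = y => hyx hc.symm)]
      have key : ∀ s : Tm F V, 0 < occ y (Tm.subst σ s) → 0 < occ y t ∨ 0 < occ y s := by
        intro s hpos
        obtain ⟨z, hz1, hz2⟩ := occ_subst_pos σ hpos
        rw [hσ, single] at hz2
        split at hz2
        · exact Or.inl hz2
        · simp only [occ_var] at hz2
          split at hz2
          · rename_i hzy; subst hzy; exact Or.inr hz1
          · omega
      constructor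
      · have h1' := hy.1
        rw [occS_cons] at h1' ⊢
        rw [hvarx] at h1' ⊢
        rcases Nat.lt_or_ge 0 (occ y t) with hpos | hz
        · omega
        · have hocct' : occ y t = 0 := by omega
          rw [hocct'] at h1' ⊢
          simp only [Nat.zero_add] at h1' ⊢
          obtain ⟨q', hq', hq'pos⟩ := occS_pos_iff.mp h1'
          obtain ⟨q, hq, rfl⟩ := Multiset.mem_map.mp hq'
          have hq1 : (applyEq σ q).1 = Tm.subst σ q.1 := rfl
          have hq2 : (applyEq σ q).2 = Tm.subst σ q.2 := rfl
          rw [hq1, hq2] at hq'pos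
          have : 0 < occ y q.1 + occ y q.2 := by
            rcases Nat.lt_or_ge 0 (occ y (Tm.subst σ q.1)) with hp1 | hp1
            · rcases key q.1 hp1 with hk | hk
              · omega
              · omega
            · have hp2 : 0 < occ y (Tm.subst σ q.2) := by omega
              rcases key q.2 hp2 with hk | hk
              · omega
              · omega
          exact occS_pos_iff.mpr ⟨q, hq, this⟩
      · intro hs
        apply hy.2
        have h1' := hs.1
        rw [occS_cons, hvarx] at h1'
        have h2' := hs.2
        rw [lhsC_cons, if_neg (by simp only [Tm.var.injEq]; exact fun hc => hyx hc.symm)] at h2'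
        obtain ⟨q0, hq0, hq01⟩ := lhsC_pos_iff.mp (by omega : 0 < lhsC y R)
        have hq0pos : 0 < occ y q0.1 + occ y q0.2 := by
          rw [hq01]; simp
        have hRpos : 0 < occS y R := occS_pos_iff.mpr ⟨q0, hq0, hq0pos⟩
        have hocct' : occ y t = 0 := by omega
        have hoccR : occS y R = 1 := by omega
        have hpres : ∀ s : Tm F V, occ y (Tm.subst σ s) = occ y s := by
          intro s
          apply occ_subst_eq
          · rw [hσ, single, if_neg hyx]
          · intro z hz
            rw [hσ, single]
            split
            · exact hocct'
            · simp [hz]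
        have hoccmap : occS y (R.map (applyEq σ)) = occS y R := by
          rw [occS, Multiset.map_map, occS]
          congr 1
          apply Multiset.map_congr rfl
          intro q hq
          simp only [Function.comp_apply, applyEq]
          rw [hpres q.1, hpres q.2]
        have hS'occ : occS y ((Tm.var x, t) ::ₘ R.map (applyEq σ)) = 1 := by
          rw [occS_cons, hvarx, hocct', hoccmap, hoccR]
        refine ⟨hS'occ, ?_⟩
        have hub := lhsC_le_occS y ((Tm.var x, t) ::ₘ R.map (applyEq σ))
        have hlb : 0 < lhsC y ((Tm.var x, t) ::ₘ R.map (applyEq σ)) := by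
          apply lhsC_pos_iff.mpr
          refine ⟨applyEq σ q0, Multiset.mem_cons_of_mem (Multiset.mem_map_of_mem _ hq0), ?_⟩
          rw [show (applyEq σ q0).1 = Tm.subst σ q0.1 from rfl, hq01]
          rw [subst_var, hσ, single, if_neg hyx]
        omega
    have hss : uv ((Tm.var x, t) ::ₘ R.map (applyEq σ)) ⊂ uv ((Tm.var x, t) ::ₘ R) :=
      (Finset.ssubset_iff_of_subset hsub).mpr ⟨x, hxS, hxS'⟩
    exact lex3_lt (Or.inl (Finset.card_lt_card hss))

end MM

/-- The constraint-solving rewriting system terminates: there is no infinite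
sequence of rule applications starting from any finite set of equality constraints. -/
theorem unification_rules_terminate {F V : Type} [DecidableEq V]
    (f : ℕ → Multiset (Tm F V × Tm F V)) :
    ¬ (∀ n : ℕ, Step (f n) (f (n + 1))) := by
  intro hstep
  have hdec : ∀ n, MM.μ (f (n + 1)) < MM.μ (f n) := fun n => MM.step_decrease (hstep n)
  have wf : WellFounded ((· < ·) : (ℕ ×ₗ ℕ ×ₗ ℕ) → (ℕ ×ₗ ℕ ×ₗ ℕ) → Prop) :=
    IsWellFounded.wf
  obtain ⟨m, hm, hmin⟩ := wf.has_min (Set.range fun n => MM.μ (f n)) ⟨_, ⟨0, rfl⟩⟩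
  obtain ⟨k, rfl⟩ := hm
  exact hmin _ ⟨k + 1, rfl⟩ (hdec k)
end

section
/- If the typed unification algorithm returns wrong on input constraints (C, T), then no type substitution unifies all constraints in T. -/
/-- A clash: two applications with different head symbols or different arities. -/
def IsClash {F V : Type} (p : Tm F V × Tm F V) : Prop :=
  ∃ (f g : F) (ts ss : List (Tm F V)),
    p = (Tm.app f ts, Tm.app g ss) ∧ (f ≠ g ∨ ts.length ≠ ss.length)

/-- An occurs-check failure: an equation between a variable and a distinct term
containing it. -/
def IsOccursFail {F V : Type} (p : Tm F V × Tm F V) : Prop :=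
  ∃ (x : V) (t : Tm F V), (p = (Tm.var x, t) ∨ p = (t, Tm.var x)) ∧
    Tm.Occurs x t ∧ t ≠ Tm.var x

/-- A constraint set on which the algorithm fails. -/
def Fails {F V : Type} (S : Multiset (Tm F V × Tm F V)) : Prop :=
  ∃ p ∈ S, IsClash p ∨ IsOccursFail p

/-- A constraint set in solved (normal) form. -/
def SolvedWith {F V : Type} (S : Multiset (Tm F V × Tm F V))
    (L : List (V × Tm F V)) : Prop :=
  S = ↑(L.map (fun p => ((Tm.var p.1 : Tm F V), p.2))) ∧
    (L.map Prod.fst).Nodup ∧ ∀ p ∈ L, ∀ q ∈ L, ¬ Tm.Occurs p.1 q.2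

def Solved {F V : Type} (S : Multiset (Tm F V × Tm F V)) : Prop :=
  ∃ L, SolvedWith S L

/-- `θ` unifies every constraint in `S`. -/
def Unifies {F V : Type} (θ : V → Tm F V) (S : Multiset (Tm F V × Tm F V)) : Prop :=
  ∀ p ∈ S, Tm.subst θ p.1 = Tm.subst θ p.2

section Aux
variable {F V : Type}

theorem Tm.my_ind {P : Tm F V → Prop} (hv : ∀ x, P (Tm.var x))
    (ha : ∀ f ts, (∀ t ∈ ts, P t) → P (Tm.app f ts)) : ∀ t, P t
  | Tm.var x => hv x
  | Tm.app f ts => ha f ts (fun t ht => Tm.my_ind hv ha t)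
decreasing_by simp_wf; have := List.sizeOf_lt_of_mem ht; omega

@[simp] theorem subst_var (θ : V → Tm F V) (x : V) :
    Tm.subst θ (Tm.var x) = θ x := by rw [Tm.subst]

@[simp] theorem subst_app (θ : V → Tm F V) (f : F) (ts : List (Tm F V)) :
    Tm.subst θ (Tm.app f ts) = Tm.app f (ts.map (Tm.subst θ)) := by
  rw [Tm.subst]
  congr 1
  simp

theorem subst_subst (θ σ : V → Tm F V) :
    ∀ u, Tm.subst θ (Tm.subst σ u) = Tm.subst (fun y => Tm.subst θ (σ y)) u := by
  apply Tm.my_ind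
  · intro x; simp
  · intro f ts ih
    simp [List.map_map]
    exact fun t ht => ih t ht

theorem occurs_size (θ : V → Tm F V) (x : V) :
    ∀ t, Tm.Occurs x t → sizeOf (θ x) ≤ sizeOf (Tm.subst θ t) := by
  apply Tm.my_ind
  · intro y h
    cases h
    simp
  · intro f ts ih h
    cases h with
    | app hmem hocc =>
      rename_i t
      have h1 := ih t hmem hocc
      have h2 : Tm.subst θ t ∈ ts.map (Tm.subst θ) := List.mem_map_of_mem hmem
      have h3 := List.sizeOf_lt_of_mem h2
      simp only [subst_app]
      have : sizeOf (Tm.app f (ts.map (Tm.subst θ))) =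
          1 + sizeOf f + sizeOf (ts.map (Tm.subst θ)) := Tm.app.sizeOf_spec ..
      omega

theorem occurs_size_app (θ : V → Tm F V) (x : V) (f : F) (ts : List (Tm F V))
    (h : Tm.Occurs x (Tm.app f ts)) :
    sizeOf (θ x) < sizeOf (Tm.subst θ (Tm.app f ts)) := by
  cases h with
  | app hmem hocc =>
    rename_i t
    have h1 := occurs_size θ x t hocc
    have h2 : Tm.subst θ t ∈ ts.map (Tm.subst θ) := List.mem_map_of_mem hmem
    have h3 := List.sizeOf_lt_of_mem h2
    simp only [subst_app]
    have : sizeOf (Tm.app f (ts.map (Tm.subst θ))) =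
        1 + sizeOf f + sizeOf (ts.map (Tm.subst θ)) := Tm.app.sizeOf_spec ..
    omega

theorem step_preserves [DecidableEq V] {S S' : Multiset (Tm F V × Tm F V)}
    (h : Step S S') (θ : V → Tm F V) (hu : Unifies θ S) : Unifies θ S' := by
  cases h with
  | decompose f ts ss R hlen =>
    intro p hp
    rcases Multiset.mem_add.1 hp with hp | hp
    · have heq := hu (Tm.app f ts, Tm.app f ss) (Multiset.mem_cons_self _ _)
      simp only [subst_app, Tm.app.injEq] at heq
      have hmaps : List.map (Tm.subst θ) ts = List.map (Tm.subst θ) ss := heq.2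
      rcases List.mem_iff_getElem.1 (by exact_mod_cast hp) with ⟨i, hi, hget⟩
      have hi' : i < ts.length := by
        have := List.length_zip (l₁ := ts) (l₂ := ss)
        omega
      have hi'' : i < ss.length := by omega
      have : (ts.zip ss)[i] = (ts[i], ss[i]) := List.getElem_zip ..
      rw [this] at hget
      subst hget
      have := congrArg (fun l => l[i]?) hmaps
      simp only [List.getElem?_map] at this
      rw [List.getElem?_eq_getElem hi', List.getElem?_eq_getElem hi''] at this
      simpa using this
    · exact hu p (Multiset.mem_cons_of_mem hp)
  | delete t R =>
    intro p hp
    exact hu p (Multiset.mem_cons_of_mem hp)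
  | orient t x R h =>
    intro p hp
    rcases Multiset.mem_cons.1 hp with hp | hp
    · subst hp
      exact (hu (t, Tm.var x) (Multiset.mem_cons_self _ _)).symm
    · exact hu p (Multiset.mem_cons_of_mem hp)
  | elim x t R h1 h2 =>
    have hx : Tm.subst θ t = θ x := by
      have := hu (Tm.var x, t) (Multiset.mem_cons_self _ _)
      simp at this
      exact this.symm
    have hfun : (fun y => Tm.subst θ (single x t y)) = θ := by
      funext y
      simp only [single]
      by_cases hy : y = x
      · subst hy; simp [hx]
      · simp [hy]
    intro p hp
    rcases Multiset.mem_cons.1 hp with hp | hp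
    · subst hp
      exact hu (Tm.var x, t) (Multiset.mem_cons_self _ _)
    · rcases Multiset.mem_map.1 hp with ⟨q, hq, rfl⟩
      have := hu q (Multiset.mem_cons_of_mem hq)
      simp only [applyEq, subst_subst, hfun]
      exact this

theorem fails_no_unifier {S : Multiset (Tm F V × Tm F V)} (hf : Fails S)
    (θ : V → Tm F V) : ¬ Unifies θ S := by
  intro hu
  rcases hf with ⟨p, hp, hclash | hocc⟩
  · rcases hclash with ⟨f, g, ts, ss, rfl, hne⟩
    have := hu _ hp
    simp only [subst_app, Tm.app.injEq] at this
    rcases hne with hne | hne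
    · exact hne this.1
    · apply hne
      have := congrArg List.length this.2
      simpa using this
  · rcases hocc with ⟨x, t, heq, hoc, hne⟩
    have ht : ∃ f ts, t = Tm.app f ts := by
      cases t with
      | var y => cases hoc; exact absurd rfl hne
      | app f ts => exact ⟨f, ts, rfl⟩
    rcases ht with ⟨f, ts, rfl⟩
    have hlt := occurs_size_app θ x f ts hoc
    have heq' : Tm.subst θ (Tm.var x) = Tm.subst θ (Tm.app f ts) := by
      rcases heq with heq | heq <;> subst heq
      · exact hu _ hp
      · exact (hu _ hp).symm
    rw [subst_var] at heq'
    rw [← heq'] at hlt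
    omega

theorem rtc_preserves {F V : Type} [DecidableEq V] {S S' : Multiset (Tm F V × Tm F V)}
    (h : Relation.ReflTransGen Step S S') (θ : V → Tm F V) (hu : Unifies θ S) :
    Unifies θ S' := by
  induction h with
  | refl => exact hu
  | tail _ hstep ih => exact step_preserves hstep θ ih

end Aux

/-- If the typed unification algorithm returns `wrong` on the type
constraints `T`, then no type substitution unifies all constraints in `T`. -/
theorem wrong_result_sound {TF TV : Type} [DecidableEq TV]
    (T T' : Multiset (Tm TF TV × Tm TF TV))
    (hT : Relation.ReflTransGen Step T T') (hfail : Fails T') :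
    ¬ ∃ μ : TV → Tm TF TV, Unifies μ T := by
  rintro ⟨μ, hμ⟩
  exact fails_no_unifier hfail μ (rtc_preserves hT μ hμ)
end
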